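/- Let β > 2, let k ≥ 1 be an integer, let γ > 0 and τ > 0 be reals with γ·τ ≥ 1, and set τ' := τ/(1+γτ). Then ∫_{R} c_{k,2/β,0} · γ^k · (∏_{i=1}^k (γ·z_i)^{−(2/β+1)}) · (1 − γ·∑_{j=1}^k z_j)^{2k/β − 1} dz_1 ⋯ dz_k = 1 / ( (γτ)^{2k/β} · Γ(1 + 2k/β) · Γ(1 − 2/β)^k ), where R := { (z_1,…,z_k) ∈ ℝ^k : z_1 > z_2 > ⋯ > z_k > 0, γ·∑_{j=1}^k z_j < 1, and γ·τ'·∑_{i=1}^{k−1} z_i + z_k > τ' }. (This is the noiseless case of the closed-form probability that the k-th strongest signal, after cancellation of the k−1 stronger signals from the interference, is received with SINR above τ, obtained by integrating the k-th factorial moment density of the STINR process over the coverage region; when γτ ≥ 1 only the leading term of the order-statistics expansion survives.) -/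

import Mathlib

open MeasureTheory Real Finset

/-- The constant `c_{k,2/β,0} = (2/β)^{k-1}·(k-1)!/(Γ(2k/β)·Γ(1-2/β)^k)`. -/
noncomputable def cConst (k : ℕ) (β : ℝ) : ℝ :=
  (2/β)^(k-1) * (Nat.factorial (k-1)) /
    (Real.Gamma (2*(k:ℝ)/β) * (Real.Gamma (1 - 2/β))^k)

namespace Stmt10


def T (n : ℕ) (a : ℝ) : Set (Fin (n+1) → ℝ) :=
  {y | (∀ i j : Fin (n+1), i < j → y j < y i) ∧ a < y (Fin.last n)}

lemma measurableSet_T (n : ℕ) (a : ℝ) : MeasurableSet (T n a) := by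
  have : T n a = (⋂ i, ⋂ j, {y : Fin (n+1) → ℝ | i < j → y j < y i}) ∩
      {y : Fin (n+1) → ℝ | a < y (Fin.last n)} := by
    ext y; simp only [T, Set.mem_setOf_eq, Set.mem_inter_iff, Set.mem_iInter]
  rw [this]
  refine MeasurableSet.inter (MeasurableSet.iInter fun i => MeasurableSet.iInter fun j => ?_)
    (measurableSet_lt measurable_const (measurable_pi_apply _))
  by_cases h : i < j
  · simp only [h, forall_true_left]
    exact measurableSet_lt (measurable_pi_apply _) (measurable_pi_apply _)
  · simp [h]

lemma T_lower {n : ℕ} {a : ℝ} {y : Fin (n+1) → ℝ} (hy : y ∈ T n a) (i : Fin (n+1)) :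
    a < y i := by
  rcases eq_or_lt_of_le (Fin.le_last i) with h | h
  · rw [h]; exact hy.2
  · exact hy.2.trans (hy.1 i (Fin.last n) h)

lemma cons_mem_T_iff {n : ℕ} {a x : ℝ} {t : Fin (n+1) → ℝ} :
    (Fin.cons x t ∈ T (n+1) a) ↔ (t ∈ T n a ∧ t 0 < x) := by
  constructor
  · rintro ⟨h1, h2⟩
    refine ⟨⟨fun i j hij => ?_, ?_⟩, ?_⟩
    · have := h1 i.succ j.succ (by simpa using hij)
      simpa using this
    · have : (Fin.last (n+1)) = (Fin.last n).succ := by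
        ext; simp
      rw [this] at h2; simpa using h2
    · have := h1 0 (Fin.succ 0) (by simp [Fin.pos_iff_ne_zero])
      simpa using this
  · rintro ⟨⟨h1, h2⟩, h3⟩
    refine ⟨fun i j hij => ?_, ?_⟩
    · induction i using Fin.cases with
      | zero =>
        induction j using Fin.cases with
        | zero => exact absurd hij (lt_irrefl _)
        | succ j' =>
          simp only [Fin.cons_zero, Fin.cons_succ]
          rcases eq_or_lt_of_le (Fin.zero_le j') with h | h
          · rw [← h]; exact h3
          · exact (h1 0 j' h).trans h3
      | succ i' =>
        induction j using Fin.cases with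
        | zero => exact absurd hij (by simp [Fin.lt_iff_val_lt_val])
        | succ j' =>
          simp only [Fin.cons_succ]
          exact h1 i' j' (by simpa using hij)
    · have : (Fin.last (n+1)) = (Fin.last n).succ := by ext; simp
      rw [this]; simpa using h2

lemma lint_Ioi {w c : ℝ} (hw : 0 < w) (hc : 0 < c) :
    ∫⁻ x in Set.Ioi c, ENNReal.ofReal (x ^ (-(w+1))) = ENNReal.ofReal (c ^ (-w) / w) := by
  rw [← ofReal_integral_eq_lintegral_ofReal (integrableOn_Ioi_rpow_of_lt (by linarith) hc)]
  · rw [integral_Ioi_rpow_of_lt (by linarith) hc]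
    congr 1
    rw [show -(w+1)+1 = -w by ring, neg_div_neg_eq]
  · filter_upwards [ae_restrict_mem measurableSet_Ioi] with x hx
    exact Real.rpow_nonneg (le_of_lt (hc.trans hx)) _

lemma measurable_rpow_const (c : ℝ) : Measurable fun x : ℝ => x ^ c :=
  measurable_of_continuousOn_compl_singleton 0 fun x hx =>
    (Real.continuousAt_rpow_const x c (Or.inl hx)).continuousWithinAt

lemma measurable_F (n : ℕ) (v u : ℝ) :
    Measurable (fun y : Fin (n+1) → ℝ =>
      ENNReal.ofReal ((y 0) ^ (-(v+1)) * ∏ i : Fin n, (y i.succ) ^ (-(u+1)))) := by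
  apply ENNReal.measurable_ofReal.comp
  exact ((measurable_rpow_const _).comp (measurable_pi_apply 0)).mul
    (Finset.measurable_prod _ fun i _ =>
      (measurable_rpow_const _).comp (measurable_pi_apply i.succ))

lemma key (u : ℝ) (hu : 0 < u) : ∀ n : ℕ, ∀ v a : ℝ, 0 < v → 0 < a →
    (∫⁻ y in T n a,
      ENNReal.ofReal ((y 0) ^ (-(v+1)) * ∏ i : Fin n, (y i.succ) ^ (-(u+1))))
    = ENNReal.ofReal (a ^ (-(v + n*u)) / ∏ j ∈ Finset.range (n+1), (v + j*u)) := by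
  classical
  intro n
  induction n with
  | zero =>
    intro v a hv ha
    have hmp := (volume_preserving_funUnique (Fin 1) ℝ).symm
    have hemb := (MeasurableEquiv.funUnique (Fin 1) ℝ).symm.measurableEmbedding
    erw [← MeasurePreserving.setLIntegral_comp_preimage_emb hmp hemb _ (T 0 a)]
    have hpre : (MeasurableEquiv.funUnique (Fin 1) ℝ).symm ⁻¹' (T 0 a) = Set.Ioi a := by
      ext x
      simp only [Set.mem_preimage, T, Set.mem_setOf_eq, Set.mem_Ioi]
      constructor
      · rintro ⟨-, h⟩; exact h
      · intro h
        refine ⟨fun i j hij => absurd hij ?_, h⟩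
        rw [Fin.eq_zero i, Fin.eq_zero j]
        exact lt_irrefl 0
    rw [hpre]
    have : ∀ x : ℝ, ((MeasurableEquiv.funUnique (Fin 1) ℝ).symm x) 0 = x := fun _ => rfl
    simp only [this, Finset.univ_eq_empty, Finset.prod_empty, mul_one]
    rw [lint_Ioi hv ha]
    norm_num
  | succ n ih =>
    intro v a hv ha
    have ha' : (0:ℝ) < a := ha
    set e := MeasurableEquiv.piFinSuccAbove (fun _ : Fin (n+2) => ℝ) 0 with he
    have hmp := (volume_preserving_piFinSuccAbove (fun _ : Fin (n+2) => ℝ) 0).symm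
    have hemb := e.symm.measurableEmbedding
    set F := fun y : Fin (n+2) → ℝ =>
      ENNReal.ofReal ((y 0) ^ (-(v+1)) * ∏ i : Fin (n+1), (y i.succ) ^ (-(u+1))) with hF
    have hFm : Measurable F := measurable_F (n+1) v u
    have hsymm : ∀ (x : ℝ) (t : Fin (n+1) → ℝ), e.symm (x, t) = Fin.cons x t := by
      intro x t
      simp only [he, MeasurableEquiv.piFinSuccAbove_symm_apply]
      exact Fin.insertNth_zero' x t
    have hPm : MeasurableSet (e.symm ⁻¹' T (n+1) a) :=
      e.symm.measurable (measurableSet_T (n+1) a)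
    calc (∫⁻ y in T (n+1) a, F y)
        = ∫⁻ p in e.symm ⁻¹' T (n+1) a, F (e.symm p) := by
          rw [hmp.setLIntegral_comp_preimage_emb hemb F (T (n+1) a)]
      _ = ∫⁻ p, (e.symm ⁻¹' T (n+1) a).indicator (fun p => F (e.symm p)) p := by
          rw [lintegral_indicator hPm]
      _ = ∫⁻ t, ∫⁻ x, (e.symm ⁻¹' T (n+1) a).indicator (fun p => F (e.symm p)) (x, t) := by
          rw [Measure.volume_eq_prod]
          exact lintegral_prod_symm _
            ((hFm.comp e.symm.measurable).indicator hPm).aemeasurable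
      _ = ∫⁻ t, (T n a).indicator (fun t => ENNReal.ofReal (v⁻¹) *
            ENNReal.ofReal ((t 0) ^ (-((v+u)+1)) *
              ∏ i : Fin n, (t i.succ) ^ (-(u+1)))) t := by
          refine lintegral_congr fun t => ?_
          by_cases ht : t ∈ T n a
          · have hmem : ∀ x : ℝ, ((x, t) ∈ e.symm ⁻¹' T (n+1) a) ↔ x ∈ Set.Ioi (t 0) := by
              intro x
              rw [Set.mem_preimage, hsymm, cons_mem_T_iff]
              simp [ht, Set.mem_Ioi]
            have ht0 : 0 < t 0 := ha'.trans (T_lower ht 0)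
            have step1 : ∀ x : ℝ, (e.symm ⁻¹' T (n+1) a).indicator
                (fun p => F (e.symm p)) (x, t)
                = (Set.Ioi (t 0)).indicator (fun x => ENNReal.ofReal (x ^ (-(v+1))) *
                    ENNReal.ofReal (∏ i : Fin (n+1), (t i) ^ (-(u+1)))) x := by
              intro x
              rw [Set.indicator_apply, Set.indicator_apply, hmem]
              by_cases hx : x ∈ Set.Ioi (t 0)
              · simp only [hx, if_true, hsymm, hF, Fin.cons_zero, Fin.cons_succ]
                rw [← ENNReal.ofReal_mul (Real.rpow_nonneg (le_of_lt
                  (ht0.trans hx)) _)]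
              · simp [hx]
            simp only [step1]
            have hm1 : Measurable fun x : ℝ => ENNReal.ofReal (x ^ (-(v+1))) := by
              exact ENNReal.measurable_ofReal.comp (measurable_rpow_const _)
            rw [lintegral_indicator measurableSet_Ioi,
              lintegral_mul_const _ hm1, lint_Ioi hv ht0, Set.indicator_of_mem ht]
            rw [div_eq_mul_inv, mul_comm ((t 0) ^ (-v)) v⁻¹,
              ENNReal.ofReal_mul (by positivity),
              mul_assoc, ← ENNReal.ofReal_mul (Real.rpow_nonneg ht0.le _)]
            congr 2
            rw [Fin.prod_univ_succ, ← mul_assoc, ← Real.rpow_add ht0]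
            congr 2
            ring
          · have : ∀ x : ℝ, (e.symm ⁻¹' T (n+1) a).indicator
                (fun p => F (e.symm p)) (x, t) = 0 := by
              intro x
              rw [Set.indicator_apply_eq_zero]
              intro hx
              rw [Set.mem_preimage, hsymm, cons_mem_T_iff] at hx
              exact absurd hx.1 ht
            simp only [this, lintegral_zero, Set.indicator_of_notMem ht]
      _ = ENNReal.ofReal (v⁻¹) * ∫⁻ t in T n a,
            ENNReal.ofReal ((t 0) ^ (-((v+u)+1)) *
              ∏ i : Fin n, (t i.succ) ^ (-(u+1))) := by
          rw [lintegral_indicator (measurableSet_T n a)]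
          exact lintegral_const_mul _ (measurable_F n (v+u) u)
      _ = ENNReal.ofReal (v⁻¹) *
            ENNReal.ofReal (a ^ (-((v+u) + n*u)) / ∏ j ∈ Finset.range (n+1), ((v+u) + j*u)) := by
          rw [ih (v+u) a (by linarith) ha]
      _ = ENNReal.ofReal (a ^ (-(v + ↑(n+1)*u)) / ∏ j ∈ Finset.range (n+1+1), (v + ↑j*u)) := by
          rw [← ENNReal.ofReal_mul (by positivity)]
          congr 1
          have h1 : -((v+u) + ↑n*u) = -(v + (↑(n+1):ℝ)*u) := by push_cast; ring
          have h2 : ∏ j ∈ Finset.range (n+1+1), (v + (j:ℝ)*u)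
              = v * ∏ j ∈ Finset.range (n+1), ((v+u) + (j:ℝ)*u) := by
            rw [Finset.prod_range_succ', mul_comm]
            congr 1
            · norm_num
            · exact Finset.prod_congr rfl fun j _ => by push_cast; ring
          rw [h1, h2]
          have hP : (0:ℝ) < ∏ j ∈ Finset.range (n+1), ((v+u) + (j:ℝ)*u) := by
            apply Finset.prod_pos
            intro j _
            have : (0:ℝ) ≤ (j:ℝ)*u := by positivity
            linarith
          field_simp



noncomputable def sumL (n : ℕ) : (Fin (n+1) → ℝ) →L[ℝ] ℝ := ∑ i, ContinuousLinearMap.proj i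

lemma sumL_apply {n : ℕ} (y : Fin (n+1) → ℝ) : sumL n y = ∑ j, y j := by
  simp [sumL]

noncomputable def fmap (n : ℕ) (γ : ℝ) (y : Fin (n+1) → ℝ) : Fin (n+1) → ℝ :=
  (γ * (1 + ∑ j, y j))⁻¹ • y

noncomputable def fder (n : ℕ) (γ : ℝ) (y : Fin (n+1) → ℝ) :
    (Fin (n+1) → ℝ) →L[ℝ] (Fin (n+1) → ℝ) :=
  (γ * (1 + ∑ j, y j))⁻¹ • ContinuousLinearMap.id ℝ (Fin (n+1) → ℝ) +
    ((-((γ * (1 + ∑ j, y j))^2)⁻¹) • (γ • sumL n)).smulRight y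

lemma hasFDerivAt_fmap {n : ℕ} {γ : ℝ} (y : Fin (n+1) → ℝ)
    (h : γ * (1 + ∑ j, y j) ≠ 0) : HasFDerivAt (fmap n γ) (fder n γ y) y := by
  have hsum : (fun y : Fin (n+1) → ℝ => ∑ j, y j) = ⇑(sumL n) := by
    funext y; rw [sumL_apply]
  have h0 : HasFDerivAt (fun y : Fin (n+1) → ℝ => ∑ j, y j) (sumL n) y := by
    rw [hsum]; exact (sumL n).hasFDerivAt
  have h1 : HasFDerivAt (fun y : Fin (n+1) → ℝ => γ * (1 + ∑ j, y j))
      (γ • sumL n) y := (h0.const_add 1).const_mul γ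
  have h2 := (hasDerivAt_inv h).comp_hasFDerivAt y h1
  have h3 := h2.smul (hasFDerivAt_id y)
  exact h3

lemma det_fder {n : ℕ} {γ : ℝ} (hγ : γ ≠ 0) (y : Fin (n+1) → ℝ)
    (h : (1:ℝ) + ∑ j, y j ≠ 0) :
    (fder n γ y).det
      = ((γ * (1 + ∑ j, y j))^(n+1))⁻¹ * (1 + ∑ j, y j)⁻¹ := by
  classical
  set s := ∑ j, y j with hs
  have hc : γ * (1 + s) ≠ 0 := by
    intro hc; rcases mul_eq_zero.1 hc with h' | h' <;> [exact hγ h'; exact h h']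
  set b := Pi.basisFun ℝ (Fin (n+1)) with hb
  have hdet : (fder n γ y).det
      = Matrix.det (LinearMap.toMatrix b b (fder n γ y).toLinearMap) :=
    (LinearMap.det_toMatrix b _).symm
  have hM : LinearMap.toMatrix b b (fder n γ y).toLinearMap
      = (γ * (1 + s))⁻¹ • (1 + Matrix.replicateCol Unit
          (fun i => ((γ * (1 + s)) * (-((γ * (1 + s))^2)⁻¹ * γ)) * y i) *
          Matrix.replicateRow Unit (fun _ => (1:ℝ))) := by
    ext i j
    rw [LinearMap.toMatrix_apply]
    simp only [hb, Pi.basisFun_apply, Pi.basisFun_repr, fder,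
      ContinuousLinearMap.coe_coe, ContinuousLinearMap.add_apply,
      ContinuousLinearMap.smul_apply, ContinuousLinearMap.id_apply,
      ContinuousLinearMap.smulRight_apply, sumL_apply]
    have hsum1 : (∑ x : Fin (n+1), Pi.single j (1:ℝ) x) = 1 := by
      simp [Finset.sum_pi_single]
    simp only [hsum1]
    rw [Matrix.smul_apply, Matrix.add_apply, Matrix.mul_apply]
    simp only [Matrix.replicateCol_apply, Matrix.replicateRow_apply, Finset.univ_unique,
      Finset.sum_singleton]
    simp only [Pi.add_apply, Pi.smul_apply, smul_eq_mul,
      Matrix.one_apply, Pi.single_apply]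
    split_ifs with hij <;>
      (simp only [← hs]; field_simp)
  rw [hdet, hM, Matrix.det_smul, Matrix.det_one_add_replicateCol_mul_replicateRow, Fintype.card_fin]
  simp only [dotProduct, one_mul, ← Finset.mul_sum, ← hs]
  have hc' : γ + γ * s ≠ 0 := by rw [show γ + γ*s = γ*(1+s) by ring]; exact hc
  field_simp
  rw [one_div, inv_pow, add_neg_cancel_right, mul_one]
  exact inv_mul_cancel₀ (pow_ne_zero _ hc)

lemma sum_pos_T {n : ℕ} {a : ℝ} (ha : 0 < a) {y : Fin (n+1) → ℝ} (hy : y ∈ T n a) :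
    0 < ∑ j, y j :=
  Finset.sum_pos (fun i _ => ha.trans (T_lower hy i)) Finset.univ_nonempty

lemma sum_fmap {n : ℕ} (γ : ℝ) (y : Fin (n+1) → ℝ) :
    ∑ j, fmap n γ y j = (γ * (1 + ∑ j, y j))⁻¹ * ∑ j, y j := by
  simp only [fmap, Pi.smul_apply, smul_eq_mul]
  rw [← Finset.mul_sum]

lemma injOn_fmap {n : ℕ} {γ : ℝ} (hγ : 0 < γ) {a : ℝ} (ha : 0 < a) :
    Set.InjOn (fmap n γ) (T n a) := by
  intro y hy y' hy' heq
  have hA : 0 < ∑ j, y j := sum_pos_T ha hy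
  have hB : 0 < ∑ j, y' j := sum_pos_T ha hy'
  have hsum : (γ * (1 + ∑ j, y j))⁻¹ * ∑ j, y j
      = (γ * (1 + ∑ j, y' j))⁻¹ * ∑ j, y' j := by
    rw [← sum_fmap, ← sum_fmap, heq]
  have hAB : (∑ j, y' j) = ∑ j, y j := by
    have h1 : γ * (1 + ∑ j, y j) ≠ 0 := by positivity
    have h2 : γ * (1 + ∑ j, y' j) ≠ 0 := by positivity
    field_simp at hsum
    nlinarith [hsum]
  funext i
  have h5 := congrFun heq i
  simp only [fmap, Pi.smul_apply, smul_eq_mul, hAB] at h5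
  have hc : (γ * (1 + ∑ j, y j))⁻¹ ≠ 0 := by positivity
  exact mul_left_cancel₀ hc h5

lemma cond4_iff {n : ℕ} {γ τ : ℝ} (hγ : 0 < γ) (hτ : 0 < τ) (y : Fin (n+1) → ℝ)
    (hP : 0 < 1 + ∑ j, y j) :
    (τ/(1+γ*τ) < γ * (τ/(1+γ*τ)) * (∑ i ∈ Finset.univ.erase (Fin.last n), fmap n γ y i)
      + fmap n γ y (Fin.last n)) ↔ γ*τ < y (Fin.last n) := by
  have hc : 0 < 1 + γ*τ := by positivity
  have hse : ∑ i ∈ Finset.univ.erase (Fin.last n), fmap n γ y i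
      = (∑ j, fmap n γ y j) - fmap n γ y (Fin.last n) := by
    rw [eq_sub_iff_add_eq, Finset.sum_erase_add _ _ (Finset.mem_univ _)]
  have hL : fmap n γ y (Fin.last n) = (γ * (1 + ∑ j, y j))⁻¹ * y (Fin.last n) := by
    simp [fmap]
  set S := ∑ j, y j
  set L := y (Fin.last n)
  have hdiff : (γ * (τ/(1+γ*τ)) * ((γ * (1 + S))⁻¹ * S - (γ * (1 + S))⁻¹ * L)
        + (γ * (1 + S))⁻¹ * L) - τ/(1+γ*τ)
      = (L - γ*τ) / (γ*(1+S)*(1+γ*τ)) := by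
    field_simp
    ring
  rw [hse, sum_fmap, hL]
  constructor
  · intro h
    have h2 : 0 < (L - γ*τ) / (γ*(1+S)*(1+γ*τ)) := by linarith [hdiff]
    rcases div_pos_iff.mp h2 with ⟨h3, _⟩ | ⟨_, h4⟩
    · linarith
    · exfalso; have : 0 < γ*(1+S)*(1+γ*τ) := by positivity
      linarith
  · intro h
    have h2 : 0 < (L - γ*τ) / (γ*(1+S)*(1+γ*τ)) :=
      div_pos (by linarith) (by positivity)
    linarith [hdiff]

lemma image_fmap {n : ℕ} {γ τ : ℝ} (hγ : 0 < γ) (hτ : 0 < τ) :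
    fmap n γ '' T n (γ*τ)
      = {z : Fin (n+1) → ℝ | (∀ i, 0 < z i) ∧ (∀ i j : Fin (n+1), i < j → z j < z i) ∧
          γ * ∑ j, z j < 1 ∧
          τ/(1+γ*τ) < γ * (τ/(1+γ*τ)) *
              (∑ i ∈ Finset.univ.erase (Fin.last n), z i) + z (Fin.last n)} := by
  have ha : 0 < γ*τ := by positivity
  ext z
  constructor
  · rintro ⟨y, hy, rfl⟩
    have hS : 0 < ∑ j, y j := sum_pos_T ha hy
    have hP : (0:ℝ) < 1 + ∑ j, y j := by linarith
    have hcpos : 0 < (γ * (1 + ∑ j, y j))⁻¹ := by positivity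
    refine ⟨fun i => ?_, fun i j hij => ?_, ?_, ?_⟩
    · exact mul_pos hcpos (ha.trans (T_lower hy i))
    · exact mul_lt_mul_of_pos_left (hy.1 i j hij) hcpos
    · rw [sum_fmap]
      rw [show γ * ((γ * (1 + ∑ j, y j))⁻¹ * ∑ j, y j) = (∑ j, y j)/(1 + ∑ j, y j) by
        field_simp]
      rw [div_lt_one hP]; linarith
    · exact (cond4_iff hγ hτ y hP).mpr hy.2
  · rintro ⟨h1, h2, h3, h4⟩
    have hD : (0:ℝ) < 1 - γ * ∑ j, z j := by linarith
    set D := 1 - γ * ∑ j, z j with hDdef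
    have hsy : ∑ j, ((γ/D) * z j) = (γ/D) * ∑ j, z j := by rw [← Finset.mul_sum]
    have hP : (0:ℝ) < 1 + ∑ j, ((γ/D) * z j) := by
      rw [hsy]
      have : 0 ≤ (γ/D) * ∑ j, z j := by
        apply mul_nonneg (by positivity)
        apply Finset.sum_nonneg
        exact fun i _ => (h1 i).le
      linarith
    have hQ : (1:ℝ) + γ/D * ∑ j, z j = 1/D := by
      rw [hDdef]
      have hD' : 1 - γ * ∑ j, z j ≠ 0 := hD.ne'
      field_simp
      ring
    have hfz : fmap n γ (fun i => (γ/D) * z i) = z := by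
      funext i
      simp only [fmap, Pi.smul_apply, smul_eq_mul, hsy, hQ]
      field_simp
    refine ⟨fun i => (γ/D) * z i, ⟨fun i j hij => ?_, ?_⟩, hfz⟩
    · exact mul_lt_mul_of_pos_left (h2 i j hij) (by positivity)
    · exact (cond4_iff hγ hτ _ hP).mp (by rw [hfz]; exact h4)

lemma abs_det_mul {n : ℕ} {γ : ℝ} (hγ : 0 < γ) (u C : ℝ)
    (y : Fin (n+1) → ℝ) (hy : ∀ i, 0 < y i) :
    |(fder n γ y).det| * (C * γ^(n+1) * (∏ i, (γ * fmap n γ y i) ^ (-(u+1))) *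
      (1 - γ * ∑ j, fmap n γ y j) ^ ((n+1:ℝ)*u - 1))
    = C * ∏ i, (y i) ^ (-(u+1)) := by
  have hS : 0 < ∑ j, y j := Finset.sum_pos (fun i _ => hy i) Finset.univ_nonempty
  set S := ∑ j, y j with hSdef
  have hP : (0:ℝ) < 1 + S := by linarith
  have e1 : ∀ i, γ * fmap n γ y i = y i * (1+S)⁻¹ := by
    intro i
    simp only [fmap, Pi.smul_apply, smul_eq_mul, ← hSdef]
    field_simp
  have e2 : 1 - γ * ∑ j, fmap n γ y j = (1+S)⁻¹ := by
    rw [sum_fmap, ← hSdef]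
    rw [show γ * ((γ * (1+S))⁻¹ * S) = S / (1+S) by field_simp]
    field_simp
    ring
  have t1 : (∏ i, (γ * fmap n γ y i) ^ (-(u+1)))
      = (∏ i, (y i) ^ (-(u+1))) * ((1+S) ^ (u+1)) ^ (n+1) := by
    have : ∀ i, (γ * fmap n γ y i) ^ (-(u+1))
        = (y i) ^ (-(u+1)) * (1+S) ^ (u+1) := by
      intro i
      rw [e1 i, Real.mul_rpow (hy i).le (by positivity),
        Real.inv_rpow hP.le, Real.rpow_neg hP.le, inv_inv]
    rw [Finset.prod_congr rfl (fun i _ => this i), Finset.prod_mul_distrib,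
      Finset.prod_const, Finset.card_univ, Fintype.card_fin]
  have t2 : ((1+S)⁻¹ : ℝ) ^ ((n+1:ℝ)*u - 1) = (1+S) ^ (1 - (n+1:ℝ)*u) := by
    rw [Real.inv_rpow hP.le, ← Real.rpow_neg hP.le]
    norm_num
  have hdet : |(fder n γ y).det| = ((γ * (1+S))^(n+1))⁻¹ * (1+S)⁻¹ := by
    rw [det_fder hγ.ne' y (by rw [← hSdef]; linarith), ← hSdef]
    exact abs_of_pos (by positivity)
  rw [hdet, t1, e2, t2]
  have t3 : ((1+S:ℝ) ^ (u+1)) ^ (n+1) * (1+S) ^ (1 - (n+1:ℝ)*u) = (1+S) ^ (n+2) := by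
    rw [← Real.rpow_natCast ((1+S:ℝ) ^ (u+1)) (n+1), ← Real.rpow_mul hP.le,
      ← Real.rpow_add hP, ← Real.rpow_natCast (1+S:ℝ) (n+2)]
    congr 1
    push_cast
    ring
  calc ((γ * (1+S))^(n+1))⁻¹ * (1+S)⁻¹ *
        (C * γ^(n+1) * ((∏ i, (y i) ^ (-(u+1))) * ((1+S) ^ (u+1)) ^ (n+1)) *
          (1+S) ^ (1 - (n+1:ℝ)*u))
      = (C * ∏ i, (y i) ^ (-(u+1))) * (((γ * (1+S))^(n+1))⁻¹ * (1+S)⁻¹ * γ^(n+1) *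
          (((1+S) ^ (u+1)) ^ (n+1) * (1+S) ^ (1 - (n+1:ℝ)*u))) := by ring
    _ = C * ∏ i, (y i) ^ (-(u+1)) := by
        rw [t3]
        have h1 : ((γ * (1+S))^(n+1))⁻¹ * (1+S)⁻¹ * γ^(n+1) * (1+S)^(n+2) = 1 := by
          rw [mul_pow]
          field_simp
          ring
        rw [h1, mul_one]


lemma measurableSet_R (n : ℕ) (γ τ : ℝ) :
    MeasurableSet {z : Fin (n+1) → ℝ | (∀ i, 0 < z i) ∧
      (∀ i j : Fin (n+1), i < j → z j < z i) ∧ γ * ∑ j, z j < 1 ∧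
      τ/(1+γ*τ) < γ * (τ/(1+γ*τ)) *
          (∑ i ∈ Finset.univ.erase (Fin.last n), z i) + z (Fin.last n)} := by
  have h1 : MeasurableSet {z : Fin (n+1) → ℝ | ∀ i, 0 < z i} := by
    have : {z : Fin (n+1) → ℝ | ∀ i, 0 < z i} = ⋂ i, {z | 0 < z i} := by
      ext z; simp [Set.mem_iInter]
    rw [this]
    exact MeasurableSet.iInter fun i =>
      measurableSet_lt measurable_const (measurable_pi_apply i)
  have h2 : MeasurableSet {z : Fin (n+1) → ℝ | ∀ i j : Fin (n+1), i < j → z j < z i} := by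
    have : {z : Fin (n+1) → ℝ | ∀ i j : Fin (n+1), i < j → z j < z i}
        = ⋂ i, ⋂ j, {z : Fin (n+1) → ℝ | i < j → z j < z i} := by
      ext z; simp [Set.mem_iInter]
    rw [this]
    refine MeasurableSet.iInter fun i => MeasurableSet.iInter fun j => ?_
    by_cases h : i < j
    · simp only [h, forall_true_left]
      exact measurableSet_lt (measurable_pi_apply _) (measurable_pi_apply _)
    · simp [h]
  have h3 : MeasurableSet {z : Fin (n+1) → ℝ | γ * ∑ j, z j < 1} :=
    measurableSet_lt (measurable_const.mul
      (Finset.measurable_sum _ fun i _ => measurable_pi_apply i)) measurable_const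
  have h4 : MeasurableSet {z : Fin (n+1) → ℝ | τ/(1+γ*τ) < γ * (τ/(1+γ*τ)) *
      (∑ i ∈ Finset.univ.erase (Fin.last n), z i) + z (Fin.last n)} :=
    measurableSet_lt measurable_const ((measurable_const.mul
      (Finset.measurable_sum _ fun i _ => measurable_pi_apply i)).add
        (measurable_pi_apply _))
  have : {z : Fin (n+1) → ℝ | (∀ i, 0 < z i) ∧
      (∀ i j : Fin (n+1), i < j → z j < z i) ∧ γ * ∑ j, z j < 1 ∧
      τ/(1+γ*τ) < γ * (τ/(1+γ*τ)) *
          (∑ i ∈ Finset.univ.erase (Fin.last n), z i) + z (Fin.last n)}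
      = _ ∩ (_ ∩ (_ ∩ _)) := rfl
  exact (h1.inter (h2.inter (h3.inter h4)))

end Stmt10

open Stmt10 in
theorem statement10 (β : ℝ) (hβ : 2 < β) (k : ℕ) (hk : 1 ≤ k)
    (γ τ : ℝ) (hγ : 0 < γ) (hτ : 0 < τ) (hγτ : 1 ≤ γ * τ) :
    (∫ z in {z : Fin k → ℝ | (∀ i, 0 < z i) ∧ (∀ i j : Fin k, i < j → z j < z i) ∧
        γ * ∑ j, z j < 1 ∧
        τ/(1+γ*τ) < γ * (τ/(1+γ*τ)) *
            (∑ i ∈ Finset.univ.erase (⟨k-1, by omega⟩ : Fin k), z i) +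
          z ⟨k-1, by omega⟩},
      cConst k β * γ^k * (∏ i, (γ * z i) ^ (-(2/β + 1))) *
        (1 - γ * ∑ j, z j) ^ (2*(k:ℝ)/β - 1)) =
    1 / ((γ*τ) ^ (2*(k:ℝ)/β) * Real.Gamma (1 + 2*(k:ℝ)/β) * (Real.Gamma (1 - 2/β))^k) := by
  obtain ⟨n, rfl⟩ : ∃ n, k = n + 1 := ⟨k - 1, (Nat.succ_pred_eq_of_pos hk).symm⟩
  have hβ0 : (0:ℝ) < β := by linarith
  have hu0 : (0:ℝ) < 2/β := by positivity
  have hu1 : 2/β < 1 := by rw [div_lt_one hβ0]; linarith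
  have ha : 0 < γ * τ := mul_pos hγ hτ
  set u := 2/β with hu
  set C := cConst (n+1) β with hC
  clear_value u C
  have hA : 2*((n:ℝ)+1)/β = u + (n:ℝ)*u := by rw [hu]; ring
  have hApos : 0 < u + (n:ℝ)*u := by
    have : (0:ℝ) ≤ (n:ℝ)*u := mul_nonneg (Nat.cast_nonneg n) hu0.le
    linarith
  have hG1 : 0 < Real.Gamma (u + (n:ℝ)*u) := Real.Gamma_pos_of_pos hApos
  have hG2 : 0 < Real.Gamma (1 - u) := Real.Gamma_pos_of_pos (by linarith)
  have hCpos : 0 < C := by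
    rw [hC]
    unfold cConst
    simp only [Nat.add_sub_cancel]
    rw [← hu]
    push_cast
    rw [hA]
    exact div_pos (mul_pos (pow_pos hu0 n)
        (Nat.cast_pos.mpr (Nat.factorial_pos n)))
      (mul_pos hG1 (pow_pos hG2 (n+1)))
  have hset : {z : Fin (n+1) → ℝ | (∀ i, 0 < z i) ∧ (∀ i j : Fin (n+1), i < j → z j < z i) ∧
        γ * ∑ j, z j < 1 ∧
        τ/(1+γ*τ) < γ * (τ/(1+γ*τ)) *
            (∑ i ∈ Finset.univ.erase (⟨n+1-1, by omega⟩ : Fin (n+1)), z i) +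
          z ⟨n+1-1, by omega⟩} = fmap n γ '' T n (γ*τ) := by
    rw [image_fmap hγ hτ]
    have hlast : (⟨n+1-1, by omega⟩ : Fin (n+1)) = Fin.last n := by
      ext; simp
    rw [hlast]
  have hRm : MeasurableSet (fmap n γ '' T n (γ*τ)) := by
    rw [image_fmap hγ hτ]; exact measurableSet_R n γ τ
  have hgmeas : Measurable (fun z : Fin (n+1) → ℝ => C * γ^(n+1) *
      (∏ i, (γ * z i) ^ (-(u + 1))) * (1 - γ * ∑ j, z j) ^ (2*(↑(n+1):ℝ)/β - 1)) := by
    refine Measurable.mul (Measurable.mul measurable_const ?_) ?_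
    · exact Finset.measurable_prod _ fun i _ =>
        (measurable_rpow_const _).comp (measurable_const.mul (measurable_pi_apply i))
    · exact (measurable_rpow_const _).comp
        (measurable_const.sub (measurable_const.mul
          (Finset.measurable_sum _ fun i _ => measurable_pi_apply i)))
  have hae : 0 ≤ᵐ[volume.restrict (fmap n γ '' T n (γ*τ))]
      (fun z : Fin (n+1) → ℝ => C * γ^(n+1) * (∏ i, (γ * z i) ^ (-(u + 1))) *
        (1 - γ * ∑ j, z j) ^ (2*(↑(n+1):ℝ)/β - 1)) := by
    refine (ae_restrict_iff' hRm).2 (ae_of_all _ fun z hz => ?_)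
    rw [image_fmap hγ hτ] at hz
    obtain ⟨h1, h2, h3, h4⟩ := hz
    have hp1 : 0 ≤ ∏ i, (γ * z i) ^ (-(u+1)) :=
      Finset.prod_nonneg fun i _ => Real.rpow_nonneg (mul_pos hγ (h1 i)).le _
    have hp2 : (0:ℝ) ≤ (1 - γ * ∑ j, z j) ^ (2*(↑(n+1):ℝ)/β - 1) :=
      Real.rpow_nonneg (by linarith) _
    exact mul_nonneg (mul_nonneg (mul_pos hCpos (pow_pos hγ (n+1))).le hp1) hp2
  rw [hset, integral_eq_lintegral_of_nonneg_ae hae hgmeas.aestronglyMeasurable]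
  have hCoV : (∫⁻ z in fmap n γ '' T n (γ*τ), ENNReal.ofReal (C * γ^(n+1) *
      (∏ i, (γ * z i) ^ (-(u + 1))) * (1 - γ * ∑ j, z j) ^ (2*(↑(n+1):ℝ)/β - 1)))
      = ENNReal.ofReal C * ENNReal.ofReal ((γ*τ) ^ (-(u + (n:ℝ)*u)) /
          ∏ j ∈ Finset.range (n+1), (u + (j:ℝ)*u)) := by
    rw [lintegral_image_eq_lintegral_abs_det_fderiv_mul volume (measurableSet_T n (γ*τ))
      (fun y hy => (hasFDerivAt_fmap y (mul_pos hγ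
        (show (0:ℝ) < 1 + ∑ j, y j by linarith [sum_pos_T ha hy])).ne').hasFDerivWithinAt)
      (injOn_fmap hγ ha)]
    calc (∫⁻ y in T n (γ*τ), ENNReal.ofReal |(fder n γ y).det| *
            ENNReal.ofReal (C * γ^(n+1) * (∏ i, (γ * fmap n γ y i) ^ (-(u + 1))) *
              (1 - γ * ∑ j, fmap n γ y j) ^ (2*(↑(n+1):ℝ)/β - 1)))
        = ∫⁻ y in T n (γ*τ), ENNReal.ofReal C *
            ENNReal.ofReal ((y 0) ^ (-(u+1)) * ∏ i : Fin n, (y i.succ) ^ (-(u+1))) := by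
          refine setLIntegral_congr_fun (measurableSet_T n (γ*τ))
            (fun y hy => ?_)
          rw [← ENNReal.ofReal_mul (abs_nonneg _), ← ENNReal.ofReal_mul hCpos.le]
          congr 1
          rw [show (2*(↑(n+1):ℝ)/β - 1) = ((n:ℝ)+1)*u - 1 by push_cast; rw [hu]; ring]
          rw [abs_det_mul hγ u C y (fun i => ha.trans (T_lower hy i))]
          rw [Fin.prod_univ_succ]
      _ = ENNReal.ofReal C * ∫⁻ y in T n (γ*τ),
            ENNReal.ofReal ((y 0) ^ (-(u+1)) * ∏ i : Fin n, (y i.succ) ^ (-(u+1))) :=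
          lintegral_const_mul _ (measurable_F n u u)
      _ = ENNReal.ofReal C * ENNReal.ofReal ((γ*τ) ^ (-(u + (n:ℝ)*u)) /
            ∏ j ∈ Finset.range (n+1), (u + (j:ℝ)*u)) := by
          rw [key u hu0 n u (γ*τ) hu0 ha]
  rw [hCoV, ← ENNReal.ofReal_mul hCpos.le]
  have hprodpos : (0:ℝ) < ∏ j ∈ Finset.range (n+1), (u + (j:ℝ)*u) := by
    refine Finset.prod_pos fun j _ => ?_
    have : (0:ℝ) ≤ (j:ℝ)*u := mul_nonneg (Nat.cast_nonneg j) hu0.le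
    linarith
  have hXnn : (0:ℝ) ≤ (γ*τ) ^ (-(u + (n:ℝ)*u)) / ∏ j ∈ Finset.range (n+1), (u + (j:ℝ)*u) :=
    div_nonneg (Real.rpow_nonneg ha.le _) hprodpos.le
  rw [ENNReal.toReal_ofReal (mul_nonneg hCpos.le hXnn)]
  -- final real algebra
  have hfact : ∏ j ∈ Finset.range (n+1), (u + (j:ℝ)*u) = u^(n+1) * ((n+1).factorial : ℝ) := by
    have h1 : ∀ j ∈ Finset.range (n+1), u + (j:ℝ)*u = u * ((j:ℝ)+1) := fun j _ => by ring
    rw [Finset.prod_congr rfl h1, Finset.prod_mul_distrib, Finset.prod_const,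
      Finset.card_range]
    congr 1
    rw [show ∏ j ∈ Finset.range (n+1), ((j:ℝ)+1)
        = ((∏ j ∈ Finset.range (n+1), (j+1) : ℕ) : ℝ) by push_cast; rfl,
      Finset.prod_range_add_one_eq_factorial]
  rw [hC]
  unfold cConst
  simp only [Nat.add_sub_cancel]
  rw [← hu]
  push_cast
  rw [hA, hfact, add_comm 1 (u + (n:ℝ)*u), Real.Gamma_add_one hApos.ne',
    Real.rpow_neg ha.le]
  have hrp : (0:ℝ) < (γ*τ) ^ (u + (n:ℝ)*u) := Real.rpow_pos_of_pos ha _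
  have hfac1 : ((n+1).factorial : ℝ) ≠ 0 := Nat.cast_ne_zero.mpr (Nat.factorial_pos _).ne'
  have hfac2 : ((n).factorial : ℝ) ≠ 0 := Nat.cast_ne_zero.mpr (Nat.factorial_pos _).ne'
  rw [show ((n+1).factorial : ℝ) = ((n:ℝ)+1) * (n.factorial : ℝ) by
    rw [Nat.factorial_succ]; push_cast; ring]
  have hG1' : Real.Gamma (u + (n:ℝ)*u) ≠ 0 := hG1.ne'
  have hG2' : Real.Gamma (1 - u) ≠ 0 := hG2.ne'
  have hrp' : (γ*τ) ^ (u + (n:ℝ)*u) ≠ 0 := hrp.ne'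
  have hu' : u ≠ 0 := hu0.ne'
  field_simp
  ring
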